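/- Suppose n ≥ 2m and 1 ≤ t ≤ m-1. Then χ(J_q(n,m,t)) ≤ χ(J(n,m,t)) · q^{(n-m)(m-t)}, where J(n,m,t) is the corresponding power of the Johnson graph. -/

import Mathlib

open Module

section Pivots
variable {F : Type} [Field F] {n : ℕ}

open Classical in
/-- The set of pivot (leading) coordinates of a subspace of `Fin n → F`. -/
noncomputable def piv (U : Submodule F (Fin n → F)) : Finset (Fin n) :=
  Finset.univ.filter (fun i => ∃ v ∈ U, v i ≠ 0 ∧ ∀ j < i, v j = 0)

lemma mem_piv_iff {U : Submodule F (Fin n → F)} {i : Fin n} :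
    i ∈ piv U ↔ ∃ v ∈ U, v i ≠ 0 ∧ ∀ j < i, v j = 0 := by
  classical simp [piv]

lemma exists_piv {U : Submodule F (Fin n → F)} {v : Fin n → F} (hv : v ∈ U) (h0 : v ≠ 0) :
    ∃ i ∈ piv U, v i ≠ 0 ∧ ∀ j < i, v j = 0 := by
  classical
  have hne : (Finset.univ.filter (fun j => v j ≠ 0)).Nonempty := by
    obtain ⟨j, hj⟩ := Function.ne_iff.mp h0
    exact ⟨j, by simpa using hj⟩
  set i := (Finset.univ.filter (fun j => v j ≠ 0)).min' hne with hi
  have hvi : v i ≠ 0 := by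
    have := Finset.min'_mem _ hne
    simpa using this
  have hlt : ∀ j < i, v j = 0 := by
    intro j hj
    by_contra hvj
    have : i ≤ j := Finset.min'_le _ _ (by simpa using hvj)
    exact absurd hj (not_lt.mpr this)
  exact ⟨i, mem_piv_iff.mpr ⟨v, hv, hvi, hlt⟩, hvi, hlt⟩

lemma piv_inf_subset (U W : Submodule F (Fin n → F)) :
    piv (U ⊓ W) ⊆ piv U ∩ piv W := by
  intro i hi
  rw [mem_piv_iff] at hi
  obtain ⟨v, hv, h1, h2⟩ := hi
  exact Finset.mem_inter.mpr ⟨mem_piv_iff.mpr ⟨v, hv.1, h1, h2⟩, mem_piv_iff.mpr ⟨v, hv.2, h1, h2⟩⟩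

lemma card_piv (U : Submodule F (Fin n → F)) : (piv U).card = finrank F U := by
  classical
  choose w hwU hw1 hw2 using fun i : (piv U : Finset (Fin n)) => mem_piv_iff.mp i.2
  -- linear independence of the pivot witnesses
  have hLI : LinearIndependent F (fun i : (piv U : Finset (Fin n)) => (⟨w i, hwU i⟩ : U)) := by
    rw [Fintype.linearIndependent_iff]
    intro g hg
    by_contra hne
    push_neg at hne
    obtain ⟨i₀, hi₀⟩ := hne
    have hsne : (Finset.univ.filter (fun i => g i ≠ 0)).Nonempty := ⟨i₀, by simpa using hi₀⟩
    set i := (Finset.univ.filter (fun i => g i ≠ 0)).min' hsne with hidef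
    have hgi : g i ≠ 0 := (Finset.mem_filter.mp (Finset.min'_mem _ hsne)).2
    have hg' : (∑ i', g i' • w i') = (0 : Fin n → F) := by
      have := congrArg (Subtype.val) hg
      simpa using this
    have heval := congrFun hg' (i : Fin n)
    simp only [Finset.sum_apply, Pi.smul_apply, smul_eq_mul, Pi.zero_apply] at heval
    rw [Finset.sum_eq_single i] at heval
    · exact hgi ((mul_eq_zero.mp heval).resolve_right (hw1 i))
    · intro i' _ hne'
      rcases eq_or_ne (g i') 0 with h | h
      · simp [h]
      · have : i ≤ i' := Finset.min'_le _ _ (by simpa using h)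
        have hlt : (i : Fin n) < (i' : Fin n) := by
          have : i < i' := lt_of_le_of_ne this (Ne.symm hne')
          exact this
        rw [hw2 i' _ hlt, mul_zero]
    · intro h
      exact absurd (Finset.mem_univ i) h
  have hle : (piv U).card ≤ finrank F U := by
    have := hLI.fintype_card_le_finrank
    simpa [Fintype.card_coe] using this
  -- spanning
  set S : Submodule F (Fin n → F) :=
    Submodule.span F (Set.range fun i : (piv U : Finset (Fin n)) => w i) with hS
  have key : ∀ e d : ℕ, n ≤ d + e → ∀ v ∈ U, (∀ j : Fin n, (j : ℕ) < d → v j = 0) → v ∈ S := by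
    intro e
    induction e with
    | zero =>
      intro d hd v _ hv
      have : v = 0 := funext fun j => hv j (lt_of_lt_of_le j.2 (by omega))
      simp [this]
    | succ e ih =>
      intro d hd v hvU hv
      by_cases hdn : n ≤ d
      · have : v = 0 := funext fun j => hv j (lt_of_lt_of_le j.2 hdn)
        simp [this]
      · push_neg at hdn
        set jd : Fin n := ⟨d, hdn⟩ with hjd
        by_cases hz : v jd = 0
        · refine ih (d + 1) (by omega) v hvU fun j hj => ?_
          rcases Nat.lt_succ_iff_lt_or_eq.mp hj with h | h
          · exact hv j h
          · have : j = jd := Fin.ext h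
            rw [this]; exact hz
        · have hmem : jd ∈ piv U :=
            mem_piv_iff.mpr ⟨v, hvU, hz, fun j hj => hv j hj⟩
          set i : (piv U : Finset (Fin n)) := ⟨jd, hmem⟩ with hi
          set c : F := v jd / w i jd with hc
          have hv' : v - c • w i ∈ U := U.sub_mem hvU (U.smul_mem _ (hwU i))
          have hcoords : ∀ j : Fin n, (j : ℕ) < d + 1 → (v - c • w i) j = 0 := by
            intro j hj
            rcases Nat.lt_succ_iff_lt_or_eq.mp hj with h | h
            · have h1 : v j = 0 := hv j h
              have h2 : w i j = 0 := hw2 i j (by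
                show j < jd
                exact h)
              simp [h1, h2]
            · have : j = jd := Fin.ext h
              subst this
              have : w i jd ≠ 0 := hw1 i
              simp only [Pi.sub_apply, Pi.smul_apply, smul_eq_mul, hc]
              simp [this]
          have hv'S : v - c • w i ∈ S := ih (d + 1) (by omega) _ hv' hcoords
          have hwS : w i ∈ S := Submodule.subset_span ⟨i, rfl⟩
          have : v = (v - c • w i) + c • w i := by ring_nf
          rw [this]
          exact S.add_mem hv'S (S.smul_mem _ hwS)
  have hUS : U ≤ S := fun v hv => key n 0 (by omega) v hv (fun j hj => absurd hj (by omega))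
  have hge : finrank F U ≤ (piv U).card := by
    have h1 : finrank F U ≤ finrank F S := Submodule.finrank_mono hUS
    have h2 : finrank F S ≤ (piv U).card := by
      refine le_trans (finrank_span_le_card _) ?_
      rw [Set.toFinset_range]
      refine le_trans Finset.card_image_le ?_
      simp [Fintype.card_coe]
    omega
  omega

end Pivots

/-- The linear map `x ↦ ∑ x i • δ i`. -/
noncomputable def gdel {F : Type} [Field F] {m : ℕ} {L : Type} [Field L] [Algebra F L]
    (δ : Fin m → L) : (Fin m → F) →ₗ[F] L where
  toFun x := ∑ i, x i • δ i
  map_add' x y := by simp [add_smul, Finset.sum_add_distrib]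
  map_smul' c x := by simp [mul_smul, Finset.smul_sum]

section Code
variable {F : Type} [Field F] [Fintype F] {L : Type} [Field L] [Algebra F L]

lemma Lpow_add (j : ℕ) (x y : L) :
    (x + y) ^ Fintype.card F ^ j = x ^ Fintype.card F ^ j + y ^ Fintype.card F ^ j := by
  haveI : CharP L (ringChar F) := charP_of_injective_algebraMap (algebraMap F L).injective _
  haveI : Fact (ringChar F).Prime := ⟨CharP.char_is_prime F (ringChar F)⟩
  obtain ⟨e, -, hcard⟩ := FiniteField.card F (ringChar F)
  rw [hcard, ← pow_mul]
  exact add_pow_char_pow ..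

lemma Lpow_smul (j : ℕ) (a : F) (x : L) :
    (a • x) ^ Fintype.card F ^ j = a • x ^ Fintype.card F ^ j := by
  rw [Algebra.smul_def, Algebra.smul_def, mul_pow, ← map_pow, FiniteField.pow_card_pow]

/-- A linearized ("q-") polynomial as an `F`-linear map on `L`. -/
noncomputable def fc {t : ℕ} (c : Fin t → L) : L →ₗ[F] L where
  toFun x := ∑ jj : Fin t, c jj * x ^ Fintype.card F ^ (jj : ℕ)
  map_add' x y := by
    simp only [Lpow_add, mul_add, Finset.sum_add_distrib]
  map_smul' a x := by
    simp only [Lpow_smul, RingHom.id_apply, Finset.smul_sum, mul_smul_comm]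

/-- Evaluation of linearized polynomials at the points `g i`, i.e. the Gabidulin code map. -/
noncomputable def ev {m t : ℕ} (g : Fin m → L) : (Fin t → L) →ₗ[F] (Fin m → L) where
  toFun c := fun i => fc (F := F) c (g i)
  map_add' c c' := funext fun i => by
    simp only [fc, LinearMap.coe_mk, AddHom.coe_mk, Pi.add_apply, add_mul,
      Finset.sum_add_distrib]
  map_smul' a c := funext fun i => by
    simp only [fc, LinearMap.coe_mk, AddHom.coe_mk, Pi.smul_apply, RingHom.id_apply,
      Finset.smul_sum, smul_mul_assoc]

lemma gdel_ev {m t : ℕ} (g : Fin m → L) (c : Fin t → L) :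
    gdel (F := F) (ev (F := F) g c) = (fc (F := F) c).comp (gdel (F := F) g) := by
  refine LinearMap.ext fun x => ?_
  show ∑ i, x i • fc (F := F) c (g i) = fc (F := F) c (∑ i, x i • g i)
  rw [map_sum]
  exact Finset.sum_congr rfl fun i _ => (map_smul _ _ _).symm

variable [Fintype L]

lemma finrank_ker_fc_le {t : ℕ} (ht : 1 ≤ t) {c : Fin t → L} (hc : c ≠ 0) :
    finrank F ↥(LinearMap.ker (fc (F := F) c)) ≤ t - 1 := by
  classical
  haveI : Module.Finite F L := ⟨⟨Finset.univ, by simp⟩⟩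
  have hq1 : 1 < Fintype.card F := Fintype.one_lt_card
  set Pc : Polynomial L := ∑ jj : Fin t, Polynomial.monomial (Fintype.card F ^ (jj : ℕ)) (c jj)
    with hPc
  obtain ⟨j0, hj0⟩ := Function.ne_iff.mp hc
  have hcoeff : Pc.coeff (Fintype.card F ^ (j0 : ℕ)) = c j0 := by
    rw [hPc, Polynomial.finset_sum_coeff]
    rw [Finset.sum_eq_single j0]
    · simp [Polynomial.coeff_monomial]
    · intro j _ hj
      rw [Polynomial.coeff_monomial, if_neg]
      intro hq
      exact hj (Fin.ext (Nat.pow_right_injective hq1 hq))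
    · simp
  have hPcne : Pc ≠ 0 := fun h => hj0 (by rw [← hcoeff, h]; simp)
  have hdeg : Pc.natDegree ≤ Fintype.card F ^ (t - 1) := by
    refine Polynomial.natDegree_sum_le_of_forall_le _ _ fun j _ => ?_
    refine le_trans (Polynomial.natDegree_monomial_le _) ?_
    exact Nat.pow_le_pow_right (le_of_lt hq1) (by omega)
  have hroot : ∀ x : L, x ∈ LinearMap.ker (fc (F := F) c) → x ∈ Pc.roots.toFinset := by
    intro x hx
    rw [Multiset.mem_toFinset, Polynomial.mem_roots hPcne]
    have : Polynomial.eval x Pc = ∑ jj : Fin t, c jj * x ^ Fintype.card F ^ (jj : ℕ) := by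
      rw [hPc, Polynomial.eval_finset_sum]
      simp [Polynomial.eval_monomial]
    rw [Polynomial.IsRoot, this]
    exact hx
  haveI : Fintype ↥(LinearMap.ker (fc (F := F) c)) := Fintype.ofFinite _
  have hcard : Fintype.card ↥(LinearMap.ker (fc (F := F) c)) ≤ Fintype.card F ^ (t - 1) := by
    have h1 : Fintype.card ↥(LinearMap.ker (fc (F := F) c)) ≤ Pc.roots.toFinset.card := by
      rw [← Fintype.card_coe (Pc.roots.toFinset)]
      refine Fintype.card_le_of_injective
        (fun x : ↥(LinearMap.ker (fc (F := F) c)) =>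
          (⟨(x : L), hroot _ x.2⟩ : ↥(Pc.roots.toFinset))) ?_
      intro a b hab
      have : (a : L) = (b : L) := congrArg (Subtype.val : ↥(Pc.roots.toFinset) → L) hab
      exact Subtype.ext this
    refine le_trans h1 (le_trans (Multiset.toFinset_card_le _) (le_trans Pc.card_roots' hdeg))
  rw [card_eq_pow_finrank (K := F) (V := ↥(LinearMap.ker (fc (F := F) c)))] at hcard
  exact (Nat.pow_le_pow_iff_right hq1).mp hcard

lemma ev_injective {m t : ℕ} (ht : 1 ≤ t) (htm : t - 1 < m) {g : Fin m → L}
    (hg : LinearIndependent F g) : Function.Injective (ev (F := F) g (t := t)) := by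
  haveI : Module.Finite F L := ⟨⟨Finset.univ, by simp⟩⟩
  rw [← LinearMap.ker_eq_bot, LinearMap.ker_eq_bot']
  intro c hcz
  by_contra hc
  have hmem : ∀ i, g i ∈ LinearMap.ker (fc (F := F) c) := by
    intro i
    rw [LinearMap.mem_ker]
    exact congrFun hcz i
  have hli : LinearIndependent F
      (fun i : Fin m => (⟨g i, hmem i⟩ : ↥(LinearMap.ker (fc (F := F) c)))) := by
    apply LinearIndependent.of_comp (LinearMap.ker (fc (F := F) c)).subtype
    exact hg
  have := hli.fintype_card_le_finrank
  rw [Fintype.card_fin] at this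
  have := le_trans this (finrank_ker_fc_le ht hc)
  omega

lemma finrank_range_ev {m t : ℕ} (ht : 1 ≤ t) (htm : t - 1 < m) {g : Fin m → L}
    (hg : LinearIndependent F g) :
    finrank F ↥(LinearMap.range (ev (F := F) g (t := t))) = t * finrank F L := by
  haveI : Module.Finite F L := ⟨⟨Finset.univ, by simp⟩⟩
  have h1 := LinearMap.finrank_range_add_finrank_ker (ev (F := F) g (t := t))
  have h2 : LinearMap.ker (ev (F := F) g (t := t)) = ⊥ :=
    LinearMap.ker_eq_bot.mpr (ev_injective ht htm hg)
  rw [h2, finrank_bot, add_zero, Module.finrank_pi_fintype] at h1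
  rw [h1, Finset.sum_const, Finset.card_univ, Fintype.card_fin, smul_eq_mul]

lemma gdel_injective {m : ℕ} {g : Fin m → L} (hg : LinearIndependent F g) :
    Function.Injective (gdel (F := F) g) := by
  rw [← LinearMap.ker_eq_bot, LinearMap.ker_eq_bot']
  intro x hx
  exact funext (Fintype.linearIndependent_iff.mp hg x hx)

lemma finrank_ker_comp_le {m t : ℕ} {g : Fin m → L} (hg : LinearIndependent F g)
    (c : Fin t → L) :
    finrank F ↥(LinearMap.ker ((fc (F := F) c).comp (gdel (F := F) g)))
      ≤ finrank F ↥(LinearMap.ker (fc (F := F) c)) := by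
  haveI : Module.Finite F L := ⟨⟨Finset.univ, by simp⟩⟩
  set κ := LinearMap.ker ((fc (F := F) c).comp (gdel (F := F) g))
  have hmem : ∀ x : ↥κ, gdel (F := F) g (x : Fin m → F) ∈ LinearMap.ker (fc (F := F) c) := by
    intro x
    have := x.2
    simp only [κ, LinearMap.mem_ker, LinearMap.comp_apply] at this
    exact LinearMap.mem_ker.mpr this
  let Φ : ↥κ →ₗ[F] ↥(LinearMap.ker (fc (F := F) c)) :=
    LinearMap.codRestrict _ ((gdel (F := F) g).comp κ.subtype) hmem
  have hinj : Function.Injective Φ := by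
    intro a b hab
    have h1 : gdel (F := F) g (a : Fin m → F) = gdel (F := F) g (b : Fin m → F) :=
      congrArg (Subtype.val : ↥(LinearMap.ker (fc (F := F) c)) → L) hab
    exact Subtype.ext (gdel_injective hg h1)
  exact LinearMap.finrank_le_finrank_of_injective hinj

end Code

section Res
variable {F : Type} [Field F] {n m : ℕ}

/-- Restriction of a subspace to a coordinate set. -/
noncomputable def resP (P : Finset (Fin n)) (U : Submodule F (Fin n → F)) :
    U →ₗ[F] (↥P → F) :=
  (LinearMap.funLeft F F (fun i : ↥P => (i : Fin n))).comp U.subtype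

@[simp] lemma resP_apply (P : Finset (Fin n)) (U : Submodule F (Fin n → F)) (v : U) (i : ↥P) :
    resP P U v i = (v : Fin n → F) i := rfl

lemma resP_injective {P : Finset (Fin n)} {U : Submodule F (Fin n → F)}
    (hpiv : piv U = P) : Function.Injective (resP P U) := by
  rw [← LinearMap.ker_eq_bot, LinearMap.ker_eq_bot']
  intro v hv
  by_contra h0
  have hv0 : (v : Fin n → F) ≠ 0 := fun h => h0 (Subtype.ext h)
  obtain ⟨i, hi, hne, -⟩ := exists_piv v.2 hv0
  rw [hpiv] at hi
  exact hne (congrFun hv ⟨i, hi⟩)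

lemma resP_bijective {P : Finset (Fin n)} {U : Submodule F (Fin n → F)}
    (hpiv : piv U = P) (hU : finrank F U = m) (hP : P.card = m) :
    Function.Bijective (resP P U) := by
  have hinj := resP_injective hpiv
  have hdim : finrank F U = finrank F (↥P → F) := by
    rw [hU, Module.finrank_pi, Fintype.card_coe, hP]
  exact ⟨hinj, (LinearMap.injective_iff_surjective_of_finrank_eq_finrank hdim).mp hinj⟩

open Classical in
/-- A linear section of the restriction map (junk value if not bijective). -/
noncomputable def secP (P : Finset (Fin n)) (U : Submodule F (Fin n → F)) :
    (↥P → F) →ₗ[F] (Fin n → F) :=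
  if h : Function.Bijective (resP P U) then
    U.subtype.comp (LinearEquiv.ofBijective _ h).symm.toLinearMap else 0

variable {P : Finset (Fin n)} {U : Submodule F (Fin n → F)}
  (hpiv : piv U = P) (hU : finrank F U = m) (hP : P.card = m)

include hpiv hU hP

lemma secP_mem (x : ↥P → F) : secP P U x ∈ U := by
  rw [secP, dif_pos (resP_bijective hpiv hU hP)]
  exact ((LinearEquiv.ofBijective _ (resP_bijective hpiv hU hP)).symm x).2

lemma secP_coords (x : ↥P → F) (i : ↥P) : secP P U x (i : Fin n) = x i := by
  rw [secP, dif_pos (resP_bijective hpiv hU hP)]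
  exact congrFun ((LinearEquiv.ofBijective _ (resP_bijective hpiv hU hP)).apply_symm_apply x) i

lemma secP_res {v : Fin n → F} (hv : v ∈ U) : secP P U (fun i : ↥P => v i) = v := by
  rw [secP, dif_pos (resP_bijective hpiv hU hP)]
  have h1 : resP P U ⟨v, hv⟩ = (fun i : ↥P => v i) := rfl
  have h2 : (LinearEquiv.ofBijective _ (resP_bijective hpiv hU hP)).symm (resP P U ⟨v, hv⟩)
      = ⟨v, hv⟩ :=
    (LinearEquiv.ofBijective _ (resP_bijective hpiv hU hP)).symm_apply_apply ⟨v, hv⟩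
  rw [← h1]
  show U.subtype ((LinearEquiv.ofBijective _ (resP_bijective hpiv hU hP)).symm
    (resP P U ⟨v, hv⟩)) = v
  rw [h2]
  rfl

end Res

section Vec
variable {F : Type} [Field F] {n m : ℕ}

noncomputable def eoP (P : Finset (Fin n)) (hP : P.card = m) : Fin m ≃o ↥P :=
  P.orderIsoOfFin hP

noncomputable def eoPc (P : Finset (Fin n)) (hP : P.card = m) : Fin (n - m) ≃o ↥(Pᶜ) :=
  Pᶜ.orderIsoOfFin (by rw [Finset.card_compl, hP, Fintype.card_fin])

/-- The reduced-row-echelon basis of `U` relative to pivot set `P`. -/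
noncomputable def uvecP (P : Finset (Fin n)) (hP : P.card = m) (U : Submodule F (Fin n → F)) :
    Fin m → (Fin n → F) := fun i => secP P U (Pi.single (eoP P hP i) 1)

variable {P : Finset (Fin n)} {U : Submodule F (Fin n → F)}
  (hpiv : piv U = P) (hU : finrank F U = m) (hP : P.card = m)

include hpiv hU hP

lemma uvecP_mem (i : Fin m) : uvecP P hP U i ∈ U := secP_mem hpiv hU hP _

lemma uvecP_coords (i i' : Fin m) :
    uvecP P hP U i ((eoP P hP i' : ↥P) : Fin n) = if eoP P hP i' = eoP P hP i then 1 else 0 := by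
  rw [uvecP, secP_coords hpiv hU hP, Pi.single_apply]

lemma sum_single_coords (v : Fin n → F) (k : ↥P) :
    (∑ i : Fin m, v ((eoP P hP i : ↥P) : Fin n) • (Pi.single (eoP P hP i) (1 : F) : ↥P → F)) k
      = v (k : Fin n) := by
  classical
  simp only [Finset.sum_apply, Pi.smul_apply, Pi.single_apply, smul_eq_mul, mul_ite, mul_one,
    mul_zero]
  have h1 : ∀ i : Fin m, (if k = eoP P hP i then v ((eoP P hP i : ↥P) : Fin n) else 0)
      = if (eoP P hP).symm k = i then v (k : Fin n) else 0 := by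
    intro i
    by_cases h : k = eoP P hP i
    · rw [if_pos h, if_pos (by rw [h]; exact (eoP P hP).symm_apply_apply i), h]
    · rw [if_neg h, if_neg (by
        intro hc
        exact h (by rw [← hc, (eoP P hP).apply_symm_apply]))]
  rw [Finset.sum_congr rfl fun i _ => h1 i, Finset.sum_ite_eq]
  simp

lemma uvecP_expand {v : Fin n → F} (hv : v ∈ U) :
    ∑ i : Fin m, v ((eoP P hP i : ↥P) : Fin n) • uvecP P hP U i = v := by
  classical
  have h1 : (∑ i : Fin m, v ((eoP P hP i : ↥P) : Fin n) • uvecP P hP U i)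
      = secP P U (∑ i : Fin m, v ((eoP P hP i : ↥P) : Fin n) •
          (Pi.single (eoP P hP i) (1 : F) : ↥P → F)) := by
    rw [map_sum]
    exact Finset.sum_congr rfl fun i _ => by rw [map_smul]; rfl
  rw [h1]
  have h2 : (∑ i : Fin m, v ((eoP P hP i : ↥P) : Fin n) •
      (Pi.single (eoP P hP i) (1 : F) : ↥P → F)) = fun k : ↥P => v (k : Fin n) :=
    funext fun k => sum_single_coords hpiv hU hP v k
  rw [h2, secP_res hpiv hU hP hv]

lemma span_uvecP : U = Submodule.span F (Set.range (uvecP P hP U)) := by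
  apply le_antisymm
  · intro v hv
    rw [← uvecP_expand hpiv hU hP hv]
    exact Submodule.sum_mem _ fun i _ =>
      Submodule.smul_mem _ _ (Submodule.subset_span ⟨i, rfl⟩)
  · rw [Submodule.span_le]
    rintro - ⟨i, rfl⟩
    exact uvecP_mem hpiv hU hP i

end Vec

section VecL
variable {F : Type} [Field F] {n m : ℕ} {L : Type} [Field L] [Algebra F L]

/-- The identifying vector of `U` (rows of the non-pivot part of the RREF, as elements of `L`). -/
noncomputable def vecP (bL : Basis (Fin (n - m)) F L) (P : Finset (Fin n)) (hP : P.card = m)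
    (U : Submodule F (Fin n → F)) : Fin m → L :=
  fun i => bL.equivFun.symm (fun j => uvecP P hP U i ((eoPc P hP j : ↥(Pᶜ)) : Fin n))

lemma vecP_congr (bL : Basis (Fin (n - m)) F L) {P P' : Finset (Fin n)} (h : P = P')
    (hP : P.card = m) (hP' : P'.card = m) (U : Submodule F (Fin n → F)) :
    vecP bL P hP U = vecP bL P' hP' U := by
  subst h
  rfl

variable {bL : Basis (Fin (n - m)) F L} {P : Finset (Fin n)} {U W : Submodule F (Fin n → F)}
  (hP : P.card = m)
  (hpivU : piv U = P) (hU : finrank F U = m) (hpivW : piv W = P) (hW : finrank F W = m)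

include hpivU hU hpivW hW hP

lemma eq_of_vecP_eq (hvec : vecP bL P hP U = vecP bL P hP W) : U = W := by
  classical
  have huv : uvecP P hP U = uvecP P hP W := by
    funext i
    funext k
    by_cases hk : k ∈ P
    · obtain ⟨i', hi'⟩ := (eoP P hP).surjective ⟨k, hk⟩
      have h1 := uvecP_coords hpivU hU hP i i'
      have h2 := uvecP_coords hpivW hW hP i i'
      rw [hi'] at h1 h2
      simp only at h1 h2
      rw [show k = ((⟨k, hk⟩ : ↥P) : Fin n) from rfl, h1, h2]
    · have hk' : k ∈ Pᶜ := Finset.mem_compl.mpr hk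
      obtain ⟨j, hj⟩ := (eoPc P hP).surjective ⟨k, hk'⟩
      have h0 := congrFun hvec i
      simp only [vecP] at h0
      have hrow : (fun j => uvecP P hP U i ((eoPc P hP j : ↥(Pᶜ)) : Fin n))
          = (fun j => uvecP P hP W i ((eoPc P hP j : ↥(Pᶜ)) : Fin n)) :=
        bL.equivFun.symm.injective h0
      have h3 := congrFun hrow j
      rw [hj] at h3
      exact h3
  rw [span_uvecP hpivU hU hP, span_uvecP hpivW hW hP, huv]


lemma sum_vecP_sub {v : Fin n → F} (hvU : v ∈ U) (hvW : v ∈ W) :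
    ∑ i : Fin m, v ((eoP P hP i : ↥P) : Fin n) • (vecP bL P hP U i - vecP bL P hP W i) = 0 := by
  classical
  set x : Fin m → F := fun i => v ((eoP P hP i : ↥P) : Fin n) with hx
  set rU : Fin m → (Fin (n - m) → F) :=
    fun i j => uvecP P hP U i ((eoPc P hP j : ↥(Pᶜ)) : Fin n) with hrU
  set rW : Fin m → (Fin (n - m) → F) :=
    fun i j => uvecP P hP W i ((eoPc P hP j : ↥(Pᶜ)) : Fin n) with hrW
  have hvec : ∀ i, vecP bL P hP U i - vecP bL P hP W i = bL.equivFun.symm (rU i - rW i) := by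
    intro i
    simp only [vecP, ← map_sub]
    rfl
  have hsum : ∑ i, x i • (vecP bL P hP U i - vecP bL P hP W i)
      = bL.equivFun.symm (∑ i, x i • (rU i - rW i)) := by
    rw [map_sum]
    refine Finset.sum_congr rfl fun i _ => ?_
    rw [hvec i, map_smul]
  have hzero : (∑ i, x i • (rU i - rW i)) = 0 := by
    funext j
    have hU' := congrFun (uvecP_expand hpivU hU hP hvU) ((eoPc P hP j : ↥(Pᶜ)) : Fin n)
    have hW' := congrFun (uvecP_expand hpivW hW hP hvW) ((eoPc P hP j : ↥(Pᶜ)) : Fin n)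
    simp only [Finset.sum_apply, Pi.smul_apply, smul_eq_mul] at hU' hW'
    simp only [Finset.sum_apply, Pi.smul_apply, Pi.sub_apply, smul_eq_mul, mul_sub,
      Finset.sum_sub_distrib, Pi.zero_apply, hrU, hrW]
    rw [hU', hW', sub_self]
  rw [hsum, hzero, map_zero]

lemma finrank_inf_le_ker_gdel :
    finrank F ↥(U ⊓ W)
      ≤ finrank F ↥(LinearMap.ker (gdel (F := F) (vecP bL P hP U - vecP bL P hP W))) := by
  classical
  set δ := vecP bL P hP U - vecP bL P hP W with hδ
  have hmem : ∀ v : ↥(U ⊓ W),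
      gdel (F := F) δ (fun i => (v : Fin n → F) ((eoP P hP i : ↥P) : Fin n)) = 0 := by
    intro v
    have h := sum_vecP_sub (bL := bL) hP hpivU hU hpivW hW
      (Submodule.mem_inf.mp v.2).1 (Submodule.mem_inf.mp v.2).2
    simpa [gdel, hδ, Pi.sub_apply] using h
  let Φ : ↥(U ⊓ W) →ₗ[F] ↥(LinearMap.ker (gdel (F := F) δ)) :=
    LinearMap.codRestrict _
      ((LinearMap.funLeft F F (fun i : Fin m => ((eoP P hP i : ↥P) : Fin n))).comp
        (U ⊓ W).subtype) (fun v => LinearMap.mem_ker.mpr (hmem v))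
  have hinj : Function.Injective Φ := by
    intro a b hab
    have hco : ∀ i : Fin m,
        (a : Fin n → F) ((eoP P hP i : ↥P) : Fin n)
          = (b : Fin n → F) ((eoP P hP i : ↥P) : Fin n) :=
      fun i => congrFun (congrArg Subtype.val hab) i
    have hres : resP P U ⟨(a : Fin n → F), (Submodule.mem_inf.mp a.2).1⟩
        = resP P U ⟨(b : Fin n → F), (Submodule.mem_inf.mp b.2).1⟩ := by
      funext k
      obtain ⟨i, hi⟩ := (eoP P hP).surjective k
      simp only [resP_apply]
      rw [← hi]
      exact hco i
    have h2 := resP_injective hpivU hres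
    have h3 : (a : Fin n → F) = (b : Fin n → F) := congrArg (Subtype.val : ↥U → (Fin n → F)) h2
    exact Subtype.ext h3
  exact LinearMap.finrank_le_finrank_of_injective hinj

end VecL

section Ext
open Polynomial
variable (F : Type) [Field F] [Fintype F]

lemma Lpow_add' {L : Type} [Field L] [Algebra F L] (j : ℕ) (x y : L) :
    (x + y) ^ Fintype.card F ^ j = x ^ Fintype.card F ^ j + y ^ Fintype.card F ^ j := by
  haveI : CharP L (ringChar F) := charP_of_injective_algebraMap (algebraMap F L).injective _
  haveI : Fact (ringChar F).Prime := ⟨CharP.char_is_prime F (ringChar F)⟩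
  obtain ⟨e, -, hcard⟩ := FiniteField.card F (ringChar F)
  rw [hcard, ← pow_mul]
  exact add_pow_char_pow ..

lemma finrank_splittingField_frobPoly (s : ℕ) (hs : s ≠ 0) :
    finrank F (X ^ Fintype.card F ^ s - X : F[X]).SplittingField = s := by
  classical
  set q := Fintype.card F with hqdef
  set f : F[X] := X ^ q ^ s - X with hf
  set L := f.SplittingField with hL
  have hq1 : 1 < q := Fintype.one_lt_card
  have hN1 : 1 < q ^ s := Nat.one_lt_pow hs hq1
  haveI : Fintype L := Fintype.ofFinite _
  haveI : Fact (ringChar F).Prime := ⟨CharP.char_is_prime F (ringChar F)⟩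
  -- every element of L is fixed by x ↦ x^(q^s)
  have hfix : ∀ x : L, x ^ q ^ s = x := by
    set S : Subalgebra F L :=
      { carrier := {x : L | x ^ q ^ s = x}
        mul_mem' := fun {x y} hx hy => by
          simp only [Set.mem_setOf_eq] at *
          rw [mul_pow, hx, hy]
        one_mem' := by simp
        add_mem' := fun {x y} hx hy => by
          simp only [Set.mem_setOf_eq] at *
          rw [Lpow_add' F s x y, hx, hy]
        zero_mem' := by
          simp only [Set.mem_setOf_eq]
          exact zero_pow (by omega)
        algebraMap_mem' := fun r => by
          simp only [Set.mem_setOf_eq]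
          rw [← map_pow, FiniteField.pow_card_pow] } with hS
    have htop : S = ⊤ := by
      rw [eq_top_iff, ← Polynomial.IsSplittingField.adjoin_rootSet (K := F) L f]
      apply Algebra.adjoin_le
      intro x hx
      have hane : f ≠ 0 := FiniteField.X_pow_card_pow_sub_X_ne_zero F hs hq1
      have := (Polynomial.mem_rootSet.mp hx).2
      simp only [hf, map_sub, map_pow, aeval_X] at this
      show x ^ q ^ s = x
      have := sub_eq_zero.mp this
      exact this
    intro x
    have : x ∈ S := htop ▸ Algebra.mem_top
    exact this
  -- card L ≤ q ^ s
  have hle : Fintype.card L ≤ q ^ s := by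
    have hfLne : (X ^ q ^ s - X : L[X]) ≠ 0 :=
      FiniteField.X_pow_card_pow_sub_X_ne_zero L hs hq1
    have hmem : ∀ x : L, x ∈ (X ^ q ^ s - X : L[X]).roots.toFinset := by
      intro x
      rw [Multiset.mem_toFinset, mem_roots hfLne]
      simp [Polynomial.IsRoot, hfix x]
    calc Fintype.card L = Finset.univ.card := rfl
      _ ≤ (X ^ q ^ s - X : L[X]).roots.toFinset.card :=
          Finset.card_le_card (fun x _ => hmem x)
      _ ≤ Multiset.card (X ^ q ^ s - X : L[X]).roots := Multiset.toFinset_card_le _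
      _ ≤ (X ^ q ^ s - X : L[X]).natDegree := Polynomial.card_roots' _
      _ = q ^ s := FiniteField.X_pow_card_pow_sub_X_natDegree_eq L hs hq1
  -- q ^ s ≤ card L
  have hge : q ^ s ≤ Fintype.card L := by
    have hsep : f.Separable := by
      have hdvd : ringChar F ∣ q ^ s := by
        obtain ⟨e, -, hcard⟩ := FiniteField.card F (ringChar F)
        refine dvd_trans ?_ (dvd_pow_self q hs)
        rw [hqdef, hcard]
        exact dvd_pow_self _ e.2.ne'
      exact galois_poly_separable (ringChar F) (q ^ s) hdvd
    have hsplits : Splits (f.map (algebraMap F L)) := Polynomial.IsSplittingField.splits L f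
    have hcardroot : Fintype.card (f.rootSet L) = f.natDegree :=
      card_rootSet_eq_natDegree hsep hsplits
    have hnd : f.natDegree = q ^ s := FiniteField.X_pow_card_pow_sub_X_natDegree_eq F hs hq1
    rw [hnd] at hcardroot
    rw [← hcardroot]
    exact Fintype.card_le_of_injective _ Subtype.val_injective
  have hcardL : Fintype.card L = q ^ s := le_antisymm hle hge
  have := card_eq_pow_finrank (K := F) (V := L)
  rw [hcardL] at this
  exact (Nat.pow_right_injective hq1 this.symm)

end Ext


/-- The power of the Johnson graph. -/
def johnsonPower (n m t : ℕ) : SimpleGraph {S : Finset (Fin n) // S.card = m} where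
  Adj S T := S ≠ T ∧ t ≤ ((S : Finset (Fin n)) ∩ (T : Finset (Fin n))).card
  symm := by
    constructor
    intro S T h
    exact ⟨h.1.symm, by simpa [Finset.inter_comm] using h.2⟩
  loopless := ⟨fun S h => h.1 rfl⟩

/-- The power of the Grassmann graph. -/
def grassmannPower (F : Type) [Field F] (n m t : ℕ) :
    SimpleGraph {U : Submodule F (Fin n → F) // finrank F U = m} where
  Adj U W := U ≠ W ∧ t ≤ finrank F ((U : Submodule F (Fin n → F)) ⊓ (W : Submodule F (Fin n → F)) :
    Submodule F (Fin n → F))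
  symm := by
    constructor
    intro U W h
    exact ⟨h.1.symm, by rw [inf_comm]; exact h.2⟩
  loopless := ⟨fun U h => h.1 rfl⟩

/-- For `n ≥ 2m` and `1 ≤ t ≤ m-1`:
`χ(J_q(n,m,t)) ≤ χ(J(n,m,t)) · q^{(n-m)(m-t)}`. -/
theorem chromaticNumber_grassmannPower_le (F : Type) [Field F] [Fintype F] (n m t : ℕ)
    (hn : 2 * m ≤ n) (ht : 1 ≤ t) (htm : t ≤ m - 1) :
    (grassmannPower F n m t).chromaticNumber ≤
      (johnsonPower n m t).chromaticNumber *
        ((Fintype.card F ^ ((n - m) * (m - t)) : ℕ) : ℕ∞) := by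
  classical
  have hm2 : 2 ≤ m := by omega
  have hs0 : n - m ≠ 0 := by omega
  have hmnm : m ≤ n - m := by omega
  -- the Johnson graph has finite chromatic number
  set K := ENat.toNat (johnsonPower n m t).chromaticNumber with hK
  have hJcol : (johnsonPower n m t).Colorable K :=
    SimpleGraph.colorable_chromaticNumber_of_fintype _
  have hKne : (johnsonPower n m t).chromaticNumber ≠ ⊤ :=
    ne_top_of_le_ne_top (WithTop.natCast_ne_top _)
      (johnsonPower n m t).colorable_of_fintype.chromaticNumber_le
  have hKeq : ((K : ℕ∞)) = (johnsonPower n m t).chromaticNumber := ENat.coe_toNat hKne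
  obtain ⟨cJ⟩ := hJcol
  -- the auxiliary field extension of degree n - m
  set L := (Polynomial.X ^ Fintype.card F ^ (n - m) - Polynomial.X : Polynomial F).SplittingField
    with hLdef
  haveI : Fintype L := Fintype.ofFinite _
  haveI : Module.Finite F L := ⟨⟨Finset.univ, by simp⟩⟩
  have hrankL : finrank F L = n - m := finrank_splittingField_frobPoly F (n - m) hs0
  let bL : Basis (Fin (n - m)) F L := Module.finBasisOfFinrankEq F L hrankL
  let g : Fin m → L := fun i => bL (Fin.castLE hmnm i)
  have hg : LinearIndependent F g :=
    bL.linearIndependent.comp _ (Fin.castLE_injective hmnm)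
  -- the Gabidulin code and its quotient
  set C : Submodule F (Fin m → L) := LinearMap.range (ev (F := F) g (t := t)) with hC
  haveI : Fintype ((Fin m → L) ⧸ C) := Fintype.ofFinite _
  have hcardQ : Fintype.card ((Fin m → L) ⧸ C) = Fintype.card F ^ ((n - m) * (m - t)) := by
    have h1 : finrank F ↥C = t * (n - m) := by
      rw [hC, finrank_range_ev ht (by omega) hg, hrankL]
    have h2 := Submodule.finrank_quotient_add_finrank C
    have h3 : finrank F (Fin m → L) = m * (n - m) := by
      rw [Module.finrank_pi_fintype, hrankL, Finset.sum_const, Finset.card_univ,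
        Fintype.card_fin, smul_eq_mul]
    have h4 : finrank F ((Fin m → L) ⧸ C) = (n - m) * (m - t) := by
      have h5 : finrank F ((Fin m → L) ⧸ C) = finrank F (Fin m → L) - finrank F ↥C := by
        omega
      rw [h5, h3, h1, ← tsub_mul, mul_comm]
    rw [card_eq_pow_finrank (K := F) (V := (Fin m → L) ⧸ C), h4]
  have hpivcard : ∀ U : {U : Submodule F (Fin n → F) // finrank F U = m},
      (piv U.1).card = m := fun U => by rw [card_piv, U.2]
  -- the coloring
  let col : (grassmannPower F n m t).Coloring ((Fin K) × ((Fin m → L) ⧸ C)) :=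
    SimpleGraph.Coloring.mk
      (fun U => (cJ ⟨piv U.1, hpivcard U⟩,
        Submodule.Quotient.mk (vecP bL (piv U.1) (hpivcard U) U.1)))
      (by
        intro U W hadj hcol
        obtain ⟨hne, hrank⟩ : U ≠ W ∧ t ≤ finrank F ↥(U.1 ⊓ W.1) := hadj
        have hc1 : cJ ⟨piv U.1, hpivcard U⟩ = cJ ⟨piv W.1, hpivcard W⟩ :=
          congrArg Prod.fst hcol
        have hc2 : (Submodule.Quotient.mk (vecP bL (piv U.1) (hpivcard U) U.1) :
              (Fin m → L) ⧸ C)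
            = Submodule.Quotient.mk (vecP bL (piv W.1) (hpivcard W) W.1) :=
          congrArg Prod.snd hcol
        by_cases hpiveq : piv U.1 = piv W.1
        · -- same pivot sets: use the rank-metric code
          rw [vecP_congr bL hpiveq.symm (hpivcard W) (hpivcard U) W.1] at hc2
          have hmemC : vecP bL (piv U.1) (hpivcard U) U.1
              - vecP bL (piv U.1) (hpivcard U) W.1 ∈ C := (Submodule.Quotient.eq C).mp hc2
          by_cases hveq : vecP bL (piv U.1) (hpivcard U) U.1
              = vecP bL (piv U.1) (hpivcard U) W.1
          · exact hne (Subtype.ext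
              (eq_of_vecP_eq (hpivcard U) rfl U.2 hpiveq.symm W.2 hveq))
          · obtain ⟨c, hcev⟩ := hmemC
            have hc0 : c ≠ 0 := by
              rintro rfl
              rw [map_zero] at hcev
              exact hveq (sub_eq_zero.mp hcev.symm)
            have hA : finrank F ↥(U.1 ⊓ W.1)
                ≤ finrank F ↥(LinearMap.ker (gdel (F := F)
                  (vecP bL (piv U.1) (hpivcard U) U.1
                    - vecP bL (piv U.1) (hpivcard U) W.1))) :=
              finrank_inf_le_ker_gdel (hpivcard U) rfl U.2 hpiveq.symm W.2
            rw [← hcev, gdel_ev] at hA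
            have hB := finrank_ker_comp_le (F := F) hg c
            have hC' := finrank_ker_fc_le (F := F) ht hc0
            omega
        · -- distinct pivot sets: use the Johnson coloring
          have hJadj : (johnsonPower n m t).Adj ⟨piv U.1, hpivcard U⟩ ⟨piv W.1, hpivcard W⟩ := by
            refine ⟨fun h => hpiveq (congrArg Subtype.val h), ?_⟩
            calc t ≤ finrank F ↥(U.1 ⊓ W.1) := hrank
              _ = (piv (U.1 ⊓ W.1)).card := (card_piv _).symm
              _ ≤ (piv U.1 ∩ piv W.1).card := Finset.card_le_card (piv_inf_subset _ _)
          exact cJ.valid hJadj hc1)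
  have hcolorable := col.colorable
  rw [Fintype.card_prod, Fintype.card_fin, hcardQ] at hcolorable
  have hfinal := hcolorable.chromaticNumber_le
  refine le_trans hfinal ?_
  rw [Nat.cast_mul, hKeq]
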